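/- Let R = A + U* and S = B + V* be hyperlinear subsets of ℕ^m (A, B, U, V finite), let J be the set of coordinates strongly unbounded for R and S, and let U_J = {p ∈ U : supp(p) ⊆ J}, V_J = {q ∈ V : supp(q) ⊆ J}. If the set (A + U* − U_J*) ∩ (B + V* − V_J*) (computed in ℤ^m) is non-empty, then R and S are not separable by a recognizable subset of ℕ^m. -/

import Mathlib

/-- `P*`: all finite `ℕ`-linear combinations of elements of `P`. -/
def nstar {m : ℕ} (P : Set (Fin m → ℕ)) : Set (Fin m → ℕ) :=
  (AddSubmonoid.closure P : Set (Fin m → ℕ))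

/-- Support of a vector. -/
def supp {m : ℕ} (v : Fin m → ℕ) : Set (Fin m) := {i | v i ≠ 0}

/-- `U_J = {p ∈ U : supp p ⊆ J}`. -/
def restrictTo {m : ℕ} (U : Set (Fin m → ℕ)) (J : Set (Fin m)) : Set (Fin m → ℕ) :=
  {p ∈ U | supp p ⊆ J}

/-- A coordinate `j` is strongly unbounded for `A + U*` and `B + V*` if there are
`p ∈ U*`, `q ∈ V*` with `j ∈ supp p = supp q`. -/
def StronglyUnbounded {m : ℕ} (U V : Set (Fin m → ℕ)) (j : Fin m) : Prop :=
  ∃ p ∈ nstar U, ∃ q ∈ nstar V, j ∈ supp p ∧ supp p = supp q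

/-- Coercion of a vector of naturals to a vector of integers. -/
def toInt {m : ℕ} (v : Fin m → ℕ) : Fin m → ℤ := fun i => (v i : ℤ)

/-- `U ⊆ ℕ` is ultimately periodic. -/
def UltPeriodic (U : Set ℕ) : Prop :=
  ∃ n0 p : ℕ, 1 ≤ p ∧ ∀ n ≥ n0, (n ∈ U ↔ n + p ∈ U)

/-- A subset of `ℕ^m` is recognizable if it is a finite union of products
of ultimately periodic subsets of `ℕ`. -/
def Recognizable {m : ℕ} (S : Set (Fin m → ℕ)) : Prop :=
  ∃ (n : ℕ) (U : Fin n → Fin m → Set ℕ),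
    (∀ j i, UltPeriodic (U j i)) ∧ S = ⋃ j, {v | ∀ i, v i ∈ U j i}

/- ### Auxiliary lemmas -/

lemma mem_nstar_iff {m : ℕ} {P : Set (Fin m → ℕ)} {x : Fin m → ℕ} :
    x ∈ nstar P ↔ x ∈ AddSubmonoid.closure P := Iff.rfl

lemma nstar_mono {m : ℕ} {P Q : Set (Fin m → ℕ)} (h : P ⊆ Q) : nstar P ⊆ nstar Q :=
  AddSubmonoid.closure_mono h

lemma nstar_add_mem {m : ℕ} {P : Set (Fin m → ℕ)} {x y : Fin m → ℕ}
    (hx : x ∈ nstar P) (hy : y ∈ nstar P) : x + y ∈ nstar P :=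
  AddSubmonoid.add_mem (AddSubmonoid.closure P) hx hy

lemma nstar_nsmul_mem {m : ℕ} {P : Set (Fin m → ℕ)} {x : Fin m → ℕ}
    (hx : x ∈ nstar P) (k : ℕ) : k • x ∈ nstar P :=
  AddSubmonoid.nsmul_mem _ hx k

lemma nstar_zero_mem {m : ℕ} (P : Set (Fin m → ℕ)) : (0 : Fin m → ℕ) ∈ nstar P :=
  zero_mem (AddSubmonoid.closure P)

lemma supp_nstar_subset {m : ℕ} {P : Set (Fin m → ℕ)} {J : Set (Fin m)}
    (hP : ∀ u ∈ P, supp u ⊆ J) {x : Fin m → ℕ} (hx : x ∈ nstar P) : supp x ⊆ J := by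
  refine AddSubmonoid.closure_induction (motive := fun x _ => supp x ⊆ J) hP ?_ ?_ hx
  · intro i hi; exact absurd rfl hi
  · intro x y _ _ hxJ hyJ i hi
    rcases Decidable.eq_or_ne (x i) 0 with h | h
    · exact hyJ (by simp only [supp, Set.mem_setOf_eq, Pi.add_apply] at hi ⊢; omega)
    · exact hxJ h

lemma ultp_steps {W : Set ℕ} {n0 p : ℕ} (h : ∀ n ≥ n0, (n ∈ W ↔ n + p ∈ W)) :
    ∀ (k a : ℕ), n0 ≤ a → (a ∈ W ↔ a + k * p ∈ W) := by
  intro k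
  induction k with
  | zero => simp
  | succ k ih =>
    intro a ha
    have h1 := ih a ha
    have h2 := h (a + k * p) (le_trans ha (Nat.le_add_right _ _))
    have e : a + (k + 1) * p = a + k * p + p := by ring
    rw [e, h1, h2]

lemma ultp_key {W : Set ℕ} {n0 p : ℕ} (h : ∀ n ≥ n0, (n ∈ W ↔ n + p ∈ W)) :
    ∀ a b, n0 ≤ a → n0 ≤ b → a % p = b % p → (a ∈ W ↔ b ∈ W) := by
  have main : ∀ a b, a ≤ b → n0 ≤ a → n0 ≤ b → a % p = b % p → (a ∈ W ↔ b ∈ W) := by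
    intro a b hab ha hb hmod
    obtain ⟨c, hc⟩ := (Nat.modEq_iff_dvd' hab).mp hmod
    have hb' : b = a + c * p := by
      rw [mul_comm, ← hc, Nat.add_sub_cancel' hab]
    rw [hb']
    exact ultp_steps h c a ha
  intro a b ha hb hmod
  rcases le_total a b with hab | hab
  · exact main a b hab ha hb hmod
  · exact (main b a hab hb ha hmod.symm).symm

lemma recog_equiv {m : ℕ} {S : Set (Fin m → ℕ)} (hS : Recognizable S) :
    ∃ n0 p : ℕ, 1 ≤ p ∧ ∀ r s : Fin m → ℕ,
      (∀ i, r i = s i ∨ (n0 ≤ r i ∧ n0 ≤ s i ∧ r i % p = s i % p)) → (r ∈ S ↔ s ∈ S) := by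
  obtain ⟨n, Us, hUP, rfl⟩ := hS
  choose n0f pf hpf hper using hUP
  refine ⟨Finset.univ.sup (fun jk : Fin n × Fin m => n0f jk.1 jk.2),
    ∏ jk : Fin n × Fin m, pf jk.1 jk.2, ?_, ?_⟩
  · exact Finset.one_le_prod' (fun jk _ => hpf jk.1 jk.2)
  · intro r s hrs
    simp only [Set.mem_iUnion, Set.mem_setOf_eq]
    have key : ∀ j i, (r i ∈ Us j i ↔ s i ∈ Us j i) := by
      intro j i
      rcases hrs i with h | ⟨h1, h2, h3⟩
      · rw [h]
      · have hle : n0f j i ≤ Finset.univ.sup (fun jk : Fin n × Fin m => n0f jk.1 jk.2) :=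
          Finset.le_sup (f := fun jk : Fin n × Fin m => n0f jk.1 jk.2)
            (Finset.mem_univ (j, i))
        have hdvd : pf j i ∣ ∏ jk : Fin n × Fin m, pf jk.1 jk.2 :=
          Finset.dvd_prod_of_mem (fun jk : Fin n × Fin m => pf jk.1 jk.2)
            (Finset.mem_univ (j, i))
        exact ultp_key (hper j i) _ _ (le_trans hle h1) (le_trans hle h2)
          (Nat.ModEq.of_dvd hdvd h3)
    exact exists_congr fun j => forall_congr' fun i => key j i

theorem inseparable_of_intersection_nonempty (m : ℕ)
    (A B U V : Set (Fin m → ℕ)) (hA : A.Finite) (hB : B.Finite)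
    (hU : U.Finite) (hV : V.Finite)
    (J : Set (Fin m)) (hJ : J = {j | StronglyUnbounded U V j})
    (hne : ({x : Fin m → ℤ | ∃ a ∈ A, ∃ u ∈ nstar U, ∃ w ∈ nstar (restrictTo U J),
              x = toInt a + toInt u - toInt w} ∩
            {x : Fin m → ℤ | ∃ b ∈ B, ∃ v ∈ nstar V, ∃ w ∈ nstar (restrictTo V J),
              x = toInt b + toInt v - toInt w}).Nonempty) :
    ¬ ∃ S : Set (Fin m → ℕ), Recognizable S ∧
        Set.image2 (· + ·) A (nstar U) ⊆ S ∧
        S ∩ Set.image2 (· + ·) B (nstar V) = ∅ := by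
  classical
  rintro ⟨Srec, hrec, hRS, hdisj⟩
  obtain ⟨x, hx1, hx2⟩ := hne
  obtain ⟨a, ha, u, hu, w, hw, hxa⟩ := hx1
  obtain ⟨b, hb, v, hv, w', hw', hxb⟩ := hx2
  -- the pointwise natural-number equation
  have key : ∀ i, a i + u i + w' i = b i + v i + w i := by
    intro i
    have h := congrFun (hxa ▸ hxb) i
    simp only [toInt, Pi.add_apply, Pi.sub_apply] at h
    omega
  -- supports of w, w'
  have hsw : supp w ⊆ J := supp_nstar_subset (fun u hu => hu.2) hw
  have hsw' : supp w' ⊆ J := supp_nstar_subset (fun u hu => hu.2) hw'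
  -- witnesses for strongly unbounded coordinates
  have hwit : ∀ j : Fin m, ∃ pq : (Fin m → ℕ) × (Fin m → ℕ),
      pq.1 ∈ nstar U ∧ pq.2 ∈ nstar V ∧ supp pq.1 ⊆ J ∧ supp pq.2 ⊆ J ∧
      (j ∈ J → (pq.1 j ≠ 0 ∧ pq.2 j ≠ 0)) := by
    intro j
    by_cases hj : j ∈ J
    · rw [hJ] at hj
      obtain ⟨p, hpU, q, hqV, hjp, hpq⟩ := hj
      have hsp : supp p ⊆ J := by
        intro k hk; rw [hJ]; exact ⟨p, hpU, q, hqV, hk, hpq⟩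
      have hjq : j ∈ supp q := hpq ▸ hjp
      exact ⟨(p, q), hpU, hqV, hsp, hpq ▸ hsp, fun _ => ⟨hjp, hjq⟩⟩
    · exact ⟨(0, 0), nstar_zero_mem _, nstar_zero_mem _,
        by intro i hi; exact absurd rfl hi,
        by intro i hi; exact absurd rfl hi,
        fun h => absurd h hj⟩
  choose PQ hPQ1 hPQ2 hPQ3 hPQ4 hPQ5 using hwit
  set Pv : Fin m → ℕ := ∑ j : Fin m, (PQ j).1 with hPv
  set Qv : Fin m → ℕ := ∑ j : Fin m, (PQ j).2 with hQv
  have hPmem : Pv ∈ nstar U :=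
    AddSubmonoid.sum_mem (AddSubmonoid.closure U) (fun j _ => hPQ1 j)
  have hQmem : Qv ∈ nstar V :=
    AddSubmonoid.sum_mem (AddSubmonoid.closure V) (fun j _ => hPQ2 j)
  have hPapp : ∀ i, Pv i = ∑ j : Fin m, (PQ j).1 i := by
    intro i; rw [hPv]; exact Finset.sum_apply i _ _
  have hQapp : ∀ i, Qv i = ∑ j : Fin m, (PQ j).2 i := by
    intro i; rw [hQv]; exact Finset.sum_apply i _ _
  have hsP : ∀ i, i ∉ J → Pv i = 0 := by
    intro i hi
    rw [hPapp]
    refine Finset.sum_eq_zero (fun j _ => ?_)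
    by_contra h
    exact hi (hPQ3 j h)
  have hsQ : ∀ i, i ∉ J → Qv i = 0 := by
    intro i hi
    rw [hQapp]
    refine Finset.sum_eq_zero (fun j _ => ?_)
    by_contra h
    exact hi (hPQ4 j h)
  have hPpos : ∀ i ∈ J, 1 ≤ Pv i := by
    intro i hi
    have h1 := (hPQ5 i hi).1
    have h2 : (PQ i).1 i ≤ Pv i := by
      rw [hPapp]
      exact Finset.single_le_sum (f := fun j => (PQ j).1 i)
        (fun _ _ => Nat.zero_le _) (Finset.mem_univ i)
    omega
  have hQpos : ∀ i ∈ J, 1 ≤ Qv i := by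
    intro i hi
    have h1 := (hPQ5 i hi).2
    have h2 : (PQ i).2 i ≤ Qv i := by
      rw [hQapp]
      exact Finset.single_le_sum (f := fun j => (PQ j).2 i)
        (fun _ _ => Nat.zero_le _) (Finset.mem_univ i)
    omega
  -- recognizability data
  obtain ⟨N0, p, hp1, hequiv⟩ := recog_equiv hrec
  obtain ⟨pp, hpp⟩ : ∃ pp, p = pp + 1 := ⟨p - 1, by omega⟩
  subst hpp
  -- the pumped vectors
  have hwU : w ∈ nstar U := nstar_mono (fun x hx => hx.1) hw
  have hw'V : w' ∈ nstar V := nstar_mono (fun x hx => hx.1) hw'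
  have hXU : (u + pp • w + (N0 * (pp + 1)) • Pv) ∈ nstar U :=
    nstar_add_mem (nstar_add_mem hu (nstar_nsmul_mem hwU pp)) (nstar_nsmul_mem hPmem _)
  have hYV : (v + pp • w' + (N0 * (pp + 1)) • Qv) ∈ nstar V :=
    nstar_add_mem (nstar_add_mem hv (nstar_nsmul_mem hw'V pp)) (nstar_nsmul_mem hQmem _)
  have hrR : (a + (u + pp • w + (N0 * (pp + 1)) • Pv)) ∈ Set.image2 (· + ·) A (nstar U) :=
    Set.mem_image2_of_mem ha hXU
  have hsS : (b + (v + pp • w' + (N0 * (pp + 1)) • Qv)) ∈ Set.image2 (· + ·) B (nstar V) :=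
    Set.mem_image2_of_mem hb hYV
  have hrapp : ∀ i, (a + (u + pp • w + (N0 * (pp + 1)) • Pv)) i
      = a i + (u i + pp * w i + (N0 * (pp + 1)) * Pv i) := by
    intro i; simp [Pi.add_apply, Pi.smul_apply, smul_eq_mul]
  have hsapp : ∀ i, (b + (v + pp • w' + (N0 * (pp + 1)) • Qv)) i
      = b i + (v i + pp * w' i + (N0 * (pp + 1)) * Qv i) := by
    intro i; simp [Pi.add_apply, Pi.smul_apply, smul_eq_mul]
  -- the equivalence condition
  have hcond : ∀ i, (a + (u + pp • w + (N0 * (pp + 1)) • Pv)) i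
        = (b + (v + pp • w' + (N0 * (pp + 1)) • Qv)) i ∨
      (N0 ≤ (a + (u + pp • w + (N0 * (pp + 1)) • Pv)) i ∧
       N0 ≤ (b + (v + pp • w' + (N0 * (pp + 1)) • Qv)) i ∧
       (a + (u + pp • w + (N0 * (pp + 1)) • Pv)) i % (pp + 1)
         = (b + (v + pp • w' + (N0 * (pp + 1)) • Qv)) i % (pp + 1)) := by
    intro i
    rw [hrapp, hsapp]
    by_cases hi : i ∈ J
    · right
      have hP1 := hPpos i hi
      have hQ1 := hQpos i hi
      have hbig : ∀ c : ℕ, 1 ≤ c → N0 ≤ (N0 * (pp + 1)) * c := by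
        intro c hc
        calc N0 = N0 * 1 * 1 := by ring
        _ ≤ (N0 * (pp + 1)) * c :=
          Nat.mul_le_mul (Nat.mul_le_mul_left N0 (by omega)) hc
      refine ⟨?_, ?_, ?_⟩
      · have := hbig (Pv i) hP1; omega
      · have := hbig (Qv i) hQ1; omega
      · -- congruence mod pp+1
        have heq : (a i + (u i + pp * w i + (N0 * (pp + 1)) * Pv i))
              + (pp + 1) * (w' i + N0 * Qv i)
            = (b i + (v i + pp * w' i + (N0 * (pp + 1)) * Qv i))
              + (pp + 1) * (w i + N0 * Pv i) := by
          have hk := key i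
          calc (a i + (u i + pp * w i + (N0 * (pp + 1)) * Pv i))
                + (pp + 1) * (w' i + N0 * Qv i)
              = (a i + u i + w' i)
                + (pp * (w i + w' i) + N0 * (pp + 1) * (Pv i + Qv i)) := by ring
            _ = (b i + v i + w i)
                + (pp * (w i + w' i) + N0 * (pp + 1) * (Pv i + Qv i)) := by rw [hk]
            _ = (b i + (v i + pp * w' i + (N0 * (pp + 1)) * Qv i))
                + (pp + 1) * (w i + N0 * Pv i) := by ring
        have h1 := Nat.add_mul_mod_self_left
          (a i + (u i + pp * w i + (N0 * (pp + 1)) * Pv i)) (pp + 1) (w' i + N0 * Qv i)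
        have h2 := Nat.add_mul_mod_self_left
          (b i + (v i + pp * w' i + (N0 * (pp + 1)) * Qv i)) (pp + 1) (w i + N0 * Pv i)
        rw [← h1, ← h2, heq]
    · left
      have hwi : w i = 0 := by
        by_contra h; exact hi (hsw h)
      have hw'i : w' i = 0 := by
        by_contra h; exact hi (hsw' h)
      have hPi := hsP i hi
      have hQi := hsQ i hi
      have hk := key i
      rw [hwi, hw'i, hPi, hQi]
      omega
  -- conclude
  have hrSrec := hRS hrR
  have hsSrec := (hequiv _ _ hcond).mp hrSrec
  have : (b + (v + pp • w' + (N0 * (pp + 1)) • Qv)) ∈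
      Srec ∩ Set.image2 (· + ·) B (nstar V) := ⟨hsSrec, hsS⟩
  rw [hdisj] at this
  exact this
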